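/- With e, η, ℓ, A, C, D as in the context, for every c ∈ Fin 4 one has 3·(A c) = ∑_b ⟪η b c, C b⟫ − ∑_{a,b} ⟪D a b c, η a b⟫ (this is the first structural identity relating the contractions of ℓ against dΦ). -/

import Mathlib

open scoped RealInnerProductSpace Matrix

/-- First structural identity: `3·A c = ∑_b ⟪η b c, C b⟫ − ∑_{a,b} ⟪D a b c, η a b⟫`,
where 2-vectors of `ℝᵐ` are represented as antisymmetric `m×m` matrices. -/
theorem stmt_7 (m : ℕ) (hm : 1 ≤ m)
    (e : Fin 4 → EuclideanSpace ℝ (Fin m)) (he : Orthonormal ℝ e)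
    (wedge : EuclideanSpace ℝ (Fin m) → EuclideanSpace ℝ (Fin m) → Matrix (Fin m) (Fin m) ℝ)
    (hwedge : ∀ x y i j, wedge x y i j = x i * y j - y i * x j)
    (ip2 : Matrix (Fin m) (Fin m) ℝ → Matrix (Fin m) (Fin m) ℝ → ℝ)
    (hip2 : ∀ X Y, ip2 X Y = (1 / 2) * Matrix.trace (Xᵀ * Y))
    (η : Fin 4 → Fin 4 → Matrix (Fin m) (Fin m) ℝ)
    (hη : ∀ a b, η a b = wedge (e a) (e b))
    (ℓ : Fin 4 → Fin 4 → EuclideanSpace ℝ (Fin m))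
    (hℓ : ∀ i j, ℓ i j = -ℓ j i)
    (A : Fin 4 → ℝ) (hA : ∀ c, A c = ∑ a : Fin 4, ⟪ℓ a c, e a⟫)
    (C : Fin 4 → Matrix (Fin m) (Fin m) ℝ)
    (hC : ∀ c, C c = ∑ a : Fin 4, wedge (ℓ a c) (e a))
    (D : Fin 4 → Fin 4 → Fin 4 → Matrix (Fin m) (Fin m) ℝ)
    (hD : ∀ a b c, D a b c = wedge (ℓ a b) (e c) + wedge (ℓ c a) (e b) + wedge (ℓ b c) (e a)) :
    ∀ c, 3 * A c
      = (∑ b : Fin 4, ip2 (η b c) (C b)) - ∑ a : Fin 4, ∑ b : Fin 4, ip2 (D a b c) (η a b) := by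
  have hin : ∀ p q : EuclideanSpace ℝ (Fin m), ⟪p, q⟫ = ∑ i, p i * q i := by
    intro p q
    simp [PiLp.inner_apply, RCLike.inner_apply, conj_trivial]
    exact Finset.sum_congr rfl (fun i _ => mul_comm _ _)
  have key : ∀ x y u v : EuclideanSpace ℝ (Fin m),
      ip2 (wedge x y) (wedge u v) = ⟪x, u⟫ * ⟪y, v⟫ - ⟪x, v⟫ * ⟪y, u⟫ := by
    intro x y u v
    rw [hip2]
    have ht : Matrix.trace ((wedge x y)ᵀ * wedge u v)
        = ∑ i, ∑ j, (x j * y i - y j * x i) * (u j * v i - v j * u i) := by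
      simp [Matrix.trace, Matrix.diag, Matrix.mul_apply, Matrix.transpose_apply, hwedge]
    rw [ht, hin, hin, hin, hin]
    have expand : ∀ i j : Fin m, (x j * y i - y j * x i) * (u j * v i - v j * u i)
        = x j * u j * (y i * v i) + y j * v j * (x i * u i)
          - (x j * v j * (y i * u i) + y j * u j * (x i * v i)) := by intros; ring
    simp_rw [expand, Finset.sum_sub_distrib, Finset.sum_add_distrib, ← Finset.sum_mul,
      ← Finset.mul_sum]
    ring
  have ip2sum : ∀ (X : Matrix (Fin m) (Fin m) ℝ) (Y : Fin 4 → Matrix (Fin m) (Fin m) ℝ),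
      ip2 X (∑ a, Y a) = ∑ a, ip2 X (Y a) := by
    intro X Y
    simp [hip2, Matrix.mul_sum, Finset.mul_sum]
  have ip2add3 : ∀ X Y Z W : Matrix (Fin m) (Fin m) ℝ,
      ip2 (X + Y + Z) W = ip2 X W + ip2 Y W + ip2 Z W := by
    intro X Y Z W
    simp [hip2, Matrix.transpose_add, Matrix.add_mul]
    ring
  have hee : ∀ a b : Fin 4, ⟪e a, e b⟫ = if a = b then (1:ℝ) else 0 := by
    intro a b
    exact orthonormal_iff_ite.mp he a b
  have hll : ∀ i : Fin 4, ℓ i i = 0 := by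
    intro i
    have h2 : ℓ i i + ℓ i i = 0 := by nth_rewrite 1 [hℓ i i]; simp
    have h3 : (2:ℝ) • ℓ i i = 0 := by rw [two_smul]; exact h2
    simpa using h3
  intro c
  have e10 : ℓ 1 0 = -ℓ 0 1 := hℓ 1 0
  have e20 : ℓ 2 0 = -ℓ 0 2 := hℓ 2 0
  have e21 : ℓ 2 1 = -ℓ 1 2 := hℓ 2 1
  have e30 : ℓ 3 0 = -ℓ 0 3 := hℓ 3 0
  have e31 : ℓ 3 1 = -ℓ 1 3 := hℓ 3 1
  have e32 : ℓ 3 2 = -ℓ 2 3 := hℓ 3 2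
  have hcomm : ∀ (i : Fin 4) (x : EuclideanSpace ℝ (Fin m)), ⟪e i, x⟫ = ⟪x, e i⟫ :=
    fun i x => real_inner_comm _ _
  simp only [hA, hη, hC, hD, ip2sum, ip2add3, key]
  simp only [hee]
  simp only [hcomm]
  simp only [Fin.sum_univ_four]
  fin_cases c <;>
    simp only [Fin.reduceFinMk, Fin.isValue, Fin.reduceEq, reduceIte, ite_true, ite_false, mul_one, mul_zero,
      one_mul, zero_mul, sub_zero, zero_sub, add_zero, zero_add] <;>
    simp only [hll 0, hll 1, hll 2, hll 3, e10, e20, e21, e30, e31, e32,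
      inner_neg_left, inner_zero_left] <;>
    ring
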